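/- Rigidity theorem: Let H_A ≅ H_B be finite-dimensional with dim H_A = d, let ρ be a density operator on H_A ⊗ H_B, and let 𝒦 = {K_1,…,K_n} be a family of PVMs on H_A whose projections generate B(H_A) as a *-algebra. If ρ is a ZUS for every K_i, then ρ is pure and maximally entangled (rank(ρ) = 1 and Tr_B ρ = (1/d) I_A). -/

import Mathlib

open Matrix Kronecker Finset ComplexOrder

noncomputable section

/-- Partial trace over the first tensor factor. -/
def ptraceA {α β : Type*} [Fintype α] (ρ : Matrix (α × β) (α × β) ℂ) : Matrix β β ℂ :=
  Matrix.of fun j j' => ∑ i, ρ (i, j) (i, j')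

/-- Partial trace over the second tensor factor. -/
def ptraceB {α β : Type*} [Fintype β] (ρ : Matrix (α × β) (α × β) ℂ) : Matrix α α ℂ :=
  Matrix.of fun i i' => ∑ j, ρ (i, j) (i', j)

section Aux

variable {d : ℕ}

/-- The Kraus operators extracted from a square root `B` of `ρ = Bᴴ * B`. -/
def krausN (B : Matrix (Fin d × Fin d) (Fin d × Fin d) ℂ) (k : Fin d × Fin d) :
    Matrix (Fin d) (Fin d) ℂ :=
  Matrix.of fun a j => star (B k (j, a))

lemma trace_ptraceA {α β : Type*} [Fintype α] [Fintype β]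
    (ρ : Matrix (α × β) (α × β) ℂ) : (ptraceA ρ).trace = ρ.trace := by
  simp only [ptraceA, Matrix.trace, Matrix.diag, Matrix.of_apply, Fintype.sum_prod_type]
  exact Finset.sum_comm

lemma trace_ptraceB {α β : Type*} [Fintype α] [Fintype β]
    (ρ : Matrix (α × β) (α × β) ℂ) : (ptraceB ρ).trace = ρ.trace := by
  simp only [ptraceB, Matrix.trace, Matrix.diag, Matrix.of_apply, Fintype.sum_prod_type]

lemma ptraceA_kron_mul {d : ℕ} (X : Matrix (Fin d) (Fin d) ℂ)
    (M : Matrix (Fin d × Fin d) (Fin d × Fin d) ℂ) :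
    ptraceA ((X ⊗ₖ (1 : Matrix (Fin d) (Fin d) ℂ)) * M) =
      Matrix.of fun a b => ∑ i, ∑ j, X i j * M (j, a) (i, b) := by
  ext a b
  simp only [ptraceA, Matrix.of_apply, Matrix.mul_apply, kroneckerMap_apply, Matrix.one_apply,
    Fintype.sum_prod_type, mul_ite, mul_one, mul_zero, ite_mul, zero_mul,
    Finset.sum_ite_eq, Finset.mem_univ, if_true]

/-- Master formula: the conditional operators in terms of Kraus operators. -/
lemma master (B : Matrix (Fin d × Fin d) (Fin d × Fin d) ℂ)
    (X : Matrix (Fin d) (Fin d) ℂ) :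
    ptraceA ((X ⊗ₖ (1 : Matrix (Fin d) (Fin d) ℂ)) * (Bᴴ * B)) =
      ∑ k, krausN B k * Xᵀ * (krausN B k)ᴴ := by
  rw [ptraceA_kron_mul]
  ext a b
  simp only [Matrix.of_apply, Matrix.mul_apply, Matrix.sum_apply, Matrix.conjTranspose_apply,
    krausN, Matrix.transpose_apply, star_star, Finset.mul_sum, Finset.sum_mul]
  have swap3 : ∀ (f : Fin d → Fin d → (Fin d × Fin d) → ℂ),
      ∑ i, ∑ j, ∑ k, f i j k = ∑ k, ∑ i, ∑ j, f i j k := by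
    intro f
    calc ∑ i, ∑ j, ∑ k, f i j k = ∑ i, ∑ k, ∑ j, f i j k :=
          Finset.sum_congr rfl fun i _ => Finset.sum_comm
      _ = ∑ k, ∑ i, ∑ j, f i j k := Finset.sum_comm
  rw [swap3]
  refine Finset.sum_congr rfl fun k _ => Finset.sum_congr rfl fun i _ =>
    Finset.sum_congr rfl fun j _ => by ring

lemma ptraceB_form (B : Matrix (Fin d × Fin d) (Fin d × Fin d) ℂ) :
    ptraceB (Bᴴ * B) = ∑ k, ((krausN B k)ᴴ * krausN B k)ᵀ := by
  ext i j
  simp only [ptraceB, Matrix.of_apply, Matrix.mul_apply, Matrix.sum_apply,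
    Matrix.conjTranspose_apply, krausN, Matrix.transpose_apply, star_star]
  rw [Finset.sum_comm]
  exact Finset.sum_congr rfl fun k _ => Finset.sum_congr rfl fun a _ => by ring

/-- trace of `A * Aᴴ` is the (real) sum of squared norms of entries. -/
lemma trace_mul_conjTranspose_self {n m : Type*} [Fintype n] [Fintype m]
    (A : Matrix n m ℂ) :
    (A * Aᴴ).trace = ((∑ i, ∑ j, Complex.normSq (A i j) : ℝ) : ℂ) := by
  simp only [Matrix.trace, Matrix.diag, Matrix.mul_apply, Matrix.conjTranspose_apply]
  push_cast
  congr 1; ext i; congr 1; ext j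
  rw [mul_comm, Complex.normSq_eq_conj_mul_self]
  rfl

/-- If a finite sum of matrices of the form `A * Aᴴ` has zero trace, each `A` is zero. -/
lemma eq_zero_of_sum_AAH_trace_zero {K n : Type*} [Fintype K] [Fintype n]
    {A : K → Matrix n n ℂ} (h : (∑ k, A k * (A k)ᴴ).trace = 0) : ∀ k, A k = 0 := by
  have h' : (∑ k, ((∑ i, ∑ j, Complex.normSq (A k i j) : ℝ)) : ℂ) = 0 := by
    rw [← h, Matrix.trace_sum]
    exact Finset.sum_congr rfl fun k _ => (trace_mul_conjTranspose_self (A k)).symm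
  have h2 : (∑ k, ∑ i, ∑ j, Complex.normSq (A k i j) : ℝ) = 0 := by
    exact_mod_cast h'
  intro k
  ext i j
  have hnn : ∀ k ∈ Finset.univ (α := K), 0 ≤ ∑ i, ∑ j, Complex.normSq (A k i j) :=
    fun k _ => Finset.sum_nonneg fun i _ => Finset.sum_nonneg fun j _ => Complex.normSq_nonneg _
  have h3 := (Finset.sum_eq_zero_iff_of_nonneg hnn).mp h2 k (Finset.mem_univ k)
  have hnn2 : ∀ i ∈ Finset.univ (α := n), 0 ≤ ∑ j, Complex.normSq (A k i j) :=
    fun i _ => Finset.sum_nonneg fun j _ => Complex.normSq_nonneg _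
  have h4 := (Finset.sum_eq_zero_iff_of_nonneg hnn2).mp h3 i (Finset.mem_univ i)
  have h5 := (Finset.sum_eq_zero_iff_of_nonneg
    (fun j _ => Complex.normSq_nonneg (A k i j))).mp h4 j (Finset.mem_univ j)
  simpa using Complex.normSq_eq_zero.mp h5

/-- Transferring commutation across functions of a diagonalized Hermitian matrix. -/
lemma commute_sandwich_diagonal {n : Type*} [Fintype n] [DecidableEq n]
    (U : Matrix n n ℂ) (hU : U * Uᴴ = 1) (hU' : Uᴴ * U = 1) (e f : n → ℂ)
    (hef : ∀ i j, e i = e j → f i = f j) (Z : Matrix n n ℂ)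
    (h : Z * (U * diagonal e * Uᴴ) = (U * diagonal e * Uᴴ) * Z) :
    Z * (U * diagonal f * Uᴴ) = (U * diagonal f * Uᴴ) * Z := by
  set W := Uᴴ * Z * U with hWdef
  have hZW : Z = U * W * Uᴴ := by
    rw [hWdef]
    calc Z = (U * Uᴴ) * Z * (U * Uᴴ) := by rw [hU, Matrix.one_mul, Matrix.mul_one]
      _ = U * (Uᴴ * Z * U) * Uᴴ := by simp only [Matrix.mul_assoc]
  have hWe : W * diagonal e = diagonal e * W := by
    have h2 : Uᴴ * (Z * (U * diagonal e * Uᴴ)) * U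
        = Uᴴ * ((U * diagonal e * Uᴴ) * Z) * U := by rw [h]
    calc W * diagonal e = Uᴴ * Z * U * diagonal e * (Uᴴ * U) := by
          rw [hU', Matrix.mul_one, hWdef]
      _ = Uᴴ * (Z * (U * diagonal e * Uᴴ)) * U := by simp only [Matrix.mul_assoc]
      _ = Uᴴ * ((U * diagonal e * Uᴴ) * Z) * U := h2
      _ = (Uᴴ * U) * (diagonal e * (Uᴴ * Z * U)) := by simp only [Matrix.mul_assoc]
      _ = diagonal e * W := by rw [hU', Matrix.one_mul, hWdef]
  have hWf : W * diagonal f = diagonal f * W := by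
    ext i j
    have he := congrFun (congrFun hWe i) j
    simp only [Matrix.mul_diagonal, Matrix.diagonal_mul] at he ⊢
    rcases eq_or_ne (e i) (e j) with hee | hee
    · rw [hef i j hee, mul_comm]
    · have hw : W i j = 0 := by
        by_contra hw
        have h3 : W i j * e j = W i j * e i := by rw [he, mul_comm]
        exact hee (mul_left_cancel₀ hw h3).symm
      rw [hw, zero_mul, mul_zero]
  calc Z * (U * diagonal f * Uᴴ) = (U * W * Uᴴ) * (U * diagonal f * Uᴴ) := by rw [← hZW]
    _ = U * (W * ((Uᴴ * U) * diagonal f)) * Uᴴ := by simp only [Matrix.mul_assoc]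
    _ = U * (W * diagonal f) * Uᴴ := by rw [hU', Matrix.one_mul]
    _ = U * (diagonal f * W) * Uᴴ := by rw [hWf]
    _ = U * (diagonal f * ((Uᴴ * U) * W)) * Uᴴ := by rw [hU', Matrix.one_mul]
    _ = (U * diagonal f * Uᴴ) * (U * W * Uᴴ) := by simp only [Matrix.mul_assoc]
    _ = (U * diagonal f * Uᴴ) * Z := by rw [← hZW]

/-- existence of a compatible pseudo-inverse for a Hermitian matrix. -/
lemma exists_pseudoInv {n : Type*} [Fintype n] [DecidableEq n]
    {S : Matrix n n ℂ} (hS : S.IsHermitian) :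
    ∃ Sp : Matrix n n ℂ, Spᴴ = Sp ∧ S * (S * Sp) = S ∧
      (∀ Z, Z * S = S * Z → Z * Sp = Sp * Z) := by
  set U : Matrix n n ℂ := (hS.eigenvectorUnitary : Matrix n n ℂ) with hUdef
  have hU : U * Uᴴ = 1 := by
    simpa [Matrix.star_eq_conjTranspose] using
      (Matrix.mem_unitaryGroup_iff.mp hS.eigenvectorUnitary.2)
  have hU' : Uᴴ * U = 1 := by
    simpa [Matrix.star_eq_conjTranspose] using
      (Matrix.mem_unitaryGroup_iff'.mp hS.eigenvectorUnitary.2)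
  set e : n → ℂ := fun i => (hS.eigenvalues i : ℂ) with hedef
  have hSe : S = U * diagonal e * Uᴴ := by
    simpa [Matrix.star_eq_conjTranspose, hedef, hUdef, Function.comp_def] using hS.spectral_theorem
  refine ⟨U * diagonal (fun i => (e i)⁻¹) * Uᴴ, ?_, ?_, ?_⟩
  · simp only [Matrix.conjTranspose_mul, Matrix.conjTranspose_conjTranspose,
      Matrix.diagonal_conjTranspose]
    have : star (fun i => (e i)⁻¹) = fun i => (e i)⁻¹ := by
      funext i
      simp [hedef, ← Complex.ofReal_inv]
    rw [this, Matrix.mul_assoc]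
  · rw [hSe]
    have hmid : ∀ g h : n → ℂ, (U * diagonal g * Uᴴ) * (U * diagonal h * Uᴴ)
        = U * diagonal (fun i => g i * h i) * Uᴴ := by
      intro g h
      calc (U * diagonal g * Uᴴ) * (U * diagonal h * Uᴴ)
          = U * (diagonal g * ((Uᴴ * U) * (diagonal h))) * Uᴴ := by simp only [Matrix.mul_assoc]
        _ = U * (diagonal g * diagonal h) * Uᴴ := by rw [hU', Matrix.one_mul]
        _ = U * diagonal (fun i => g i * h i) * Uᴴ := by rw [Matrix.diagonal_mul_diagonal]
    rw [hmid, hmid]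
    have hfe : (fun i => e i * (e i * (e i)⁻¹)) = e := by
      funext i
      rcases eq_or_ne (e i) 0 with h0 | h0
      · rw [h0, _root_.inv_zero, mul_zero, mul_zero]
      · rw [mul_comm (e i) ((e i)⁻¹), ← mul_assoc, mul_inv_cancel₀ h0, one_mul]
    rw [hfe]
  · intro Z hZ
    rw [hSe] at hZ
    exact commute_sandwich_diagonal U hU hU' e _ (fun i j hij => by rw [hij]) Z hZ

/-- A matrix commuting with everything is scalar. -/
lemma comm_all_scalar {n : Type*} [Fintype n] [DecidableEq n] [Nonempty n]
    (W : Matrix n n ℂ) (h : ∀ X : Matrix n n ℂ, W * X = X * W) :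
    ∃ c : ℂ, W = c • 1 := by
  obtain ⟨z⟩ := ‹Nonempty n›
  refine ⟨W z z, ?_⟩
  ext i j
  rcases eq_or_ne i j with rfl | hij
  · have hc := congrFun (congrFun (h (Matrix.single i z 1)) i) z
    rw [Matrix.mul_single_apply_same, Matrix.single_mul_apply_same,
      one_mul, mul_one] at hc
    simp [hc, Matrix.one_apply]
  · have hc := congrFun (congrFun (h (Matrix.single j j 1)) i) j
    rw [Matrix.mul_single_apply_same,
      Matrix.single_mul_apply_of_ne (h := hij), mul_one] at hc
    simp [hc, Matrix.one_apply, hij]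

lemma rank_eq_zero_imp{n : Type*} [Fintype n] [DecidableEq n]
    {A : Matrix n n ℂ} (h : A.rank = 0) : A = 0 := by
  have h2 : LinearMap.range A.mulVecLin = ⊥ := Submodule.finrank_eq_zero.mp h
  have h3 : A.mulVecLin = 0 := LinearMap.range_eq_bot.mp h2
  ext i j
  have h4 := congrFun (LinearMap.congr_fun h3 (Pi.single j 1)) i
  rw [Matrix.mulVecLin_apply, Matrix.mulVec_single] at h4
  simpa using h4

/-- The star-subalgebra of matrices whose transpose is intertwined by all the `N k`. -/
def interSub {d : ℕ} {K : Type*} (N : K → Matrix (Fin d) (Fin d) ℂ) :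
    StarSubalgebra ℂ (Matrix (Fin d) (Fin d) ℂ) where
  carrier := {X | ∃ Y Y', (∀ k, N k * Xᵀ = Y * N k) ∧ (∀ k, N k * (Xᴴ)ᵀ = Y' * N k)}
  mul_mem' := by
    rintro X X' ⟨Y, Y₂, h1, h2⟩ ⟨Y', Y'₂, h1', h2'⟩
    refine ⟨Y' * Y, Y₂ * Y'₂, fun k => ?_, fun k => ?_⟩
    · rw [Matrix.transpose_mul, ← Matrix.mul_assoc, h1' k, Matrix.mul_assoc, h1 k,
        ← Matrix.mul_assoc]
    · rw [Matrix.conjTranspose_mul, Matrix.transpose_mul, ← Matrix.mul_assoc, h2 k,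
        Matrix.mul_assoc, h2' k, ← Matrix.mul_assoc]
  add_mem' := by
    rintro X X' ⟨Y, Y₂, h1, h2⟩ ⟨Y', Y'₂, h1', h2'⟩
    refine ⟨Y + Y', Y₂ + Y'₂, fun k => ?_, fun k => ?_⟩
    · rw [Matrix.transpose_add, Matrix.mul_add, h1 k, h1' k, Matrix.add_mul]
    · rw [Matrix.conjTranspose_add, Matrix.transpose_add, Matrix.mul_add, h2 k, h2' k,
        Matrix.add_mul]
  algebraMap_mem' := by
    intro c
    refine ⟨c • 1, star c • 1, fun k => ?_, fun k => ?_⟩ <;>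
      simp [Algebra.algebraMap_eq_smul_one, Matrix.transpose_smul, Matrix.conjTranspose_smul,
        Matrix.mul_smul, Matrix.smul_mul]
  star_mem' := by
    rintro X ⟨Y, Y₂, h1, h2⟩
    exact ⟨Y₂, Y, by simpa [Matrix.star_eq_conjTranspose] using h2,
      by simpa [Matrix.star_eq_conjTranspose] using h1⟩

/-- The star-subalgebra of matrices whose transpose commutes with `G`. -/
def commSub {d : ℕ} (G : Matrix (Fin d) (Fin d) ℂ) :
    StarSubalgebra ℂ (Matrix (Fin d) (Fin d) ℂ) where
  carrier := {X | G * Xᵀ = Xᵀ * G ∧ G * (Xᴴ)ᵀ = (Xᴴ)ᵀ * G}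
  mul_mem' := by
    rintro X X' ⟨h1, h2⟩ ⟨h1', h2'⟩
    constructor
    · rw [Matrix.transpose_mul, ← Matrix.mul_assoc, h1', Matrix.mul_assoc, h1,
        ← Matrix.mul_assoc]
    · rw [Matrix.conjTranspose_mul, Matrix.transpose_mul, ← Matrix.mul_assoc, h2,
        Matrix.mul_assoc, h2', ← Matrix.mul_assoc]
  add_mem' := by
    rintro X X' ⟨h1, h2⟩ ⟨h1', h2'⟩
    constructor
    · rw [Matrix.transpose_add, Matrix.mul_add, h1, h1', Matrix.add_mul]
    · rw [Matrix.conjTranspose_add, Matrix.transpose_add, Matrix.mul_add, h2, h2',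
        Matrix.add_mul]
  algebraMap_mem' := by
    intro c
    constructor <;>
      simp [Algebra.algebraMap_eq_smul_one, Matrix.transpose_smul, Matrix.conjTranspose_smul,
        Matrix.mul_smul, Matrix.smul_mul]
  star_mem' := by
    rintro X ⟨h1, h2⟩
    exact ⟨by simpa [Matrix.star_eq_conjTranspose] using h2,
      by simpa [Matrix.star_eq_conjTranspose] using h1⟩

end Aux

/-- Rigidity theorem: with `H_A ≅ H_B` of dimension `d`, if `ρ` is a common ZUS
for a family of PVMs generating `B(H_A)` as a *-algebra, then `ρ` is pure and
maximally entangled: `rank ρ = 1` and `Tr_B ρ = (1/d) I`. -/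
theorem stmt13 {d : ℕ} {ι : Type} [Fintype ι] {κ : ι → Type}
    [∀ i, Fintype (κ i)] [∀ i, DecidableEq (κ i)]
    (ρ : Matrix (Fin d × Fin d) (Fin d × Fin d) ℂ)
    (hρ : ρ.PosSemidef) (htr : ρ.trace = 1)
    (P : (i : ι) → κ i → Matrix (Fin d) (Fin d) ℂ)
    (hPherm : ∀ i α, (P i α).IsHermitian) (hPidem : ∀ i α, P i α * P i α = P i α)
    (hPorth : ∀ i α β, α ≠ β → P i α * P i β = 0) (hPsum : ∀ i, ∑ α, P i α = 1)
    (hZUS : ∀ i α β, α ≠ β →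
      ptraceA ((P i α ⊗ₖ (1 : Matrix (Fin d) (Fin d) ℂ)) * ρ) *
        ptraceA ((P i β ⊗ₖ (1 : Matrix (Fin d) (Fin d) ℂ)) * ρ) = 0)
    (hgen : StarAlgebra.adjoin ℂ {X | ∃ i α, X = P i α} = ⊤) :
    ρ.rank = 1 ∧ ptraceB ρ = ((d : ℂ))⁻¹ • 1 := by
  classical
  -- dimension is positive
  have hd : 0 < d := by
    rcases Nat.eq_zero_or_pos d with h0 | h
    · exfalso
      subst h0
      simp [Matrix.trace] at htr
    · exact h
  have hdC : (d : ℂ) ≠ 0 := Nat.cast_ne_zero.mpr hd.ne'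
  haveI : Nonempty (Fin d) := ⟨⟨0, hd⟩⟩
  obtain ⟨B, hB⟩ : ∃ B : Matrix (Fin d × Fin d) (Fin d × Fin d) ℂ, ρ = Bᴴ * B := by
    open scoped MatrixOrder in
    obtain ⟨B, hB⟩ := CStarAlgebra.nonneg_iff_eq_star_mul_self.mp hρ.nonneg
    exact ⟨B, hB⟩
  set N : Fin d × Fin d → Matrix (Fin d) (Fin d) ℂ := krausN B with hN
  set R : (i : ι) → κ i → Matrix (Fin d) (Fin d) ℂ := fun i α => (P i α)ᵀ with hRdef
  -- basic facts about the transposed projections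
  have hRH : ∀ i α, (R i α)ᴴ = R i α := by
    intro i α
    exact (hPherm i α).transpose
  have hRmul : ∀ i α β, R i α * R i β = (P i β * P i α)ᵀ := by
    intro i α β
    rw [hRdef]
    exact (Matrix.transpose_mul _ _).symm
  have hRR : ∀ i α, R i α * R i α = R i α := by
    intro i α
    rw [hRmul, hPidem i α]
  have hRorth : ∀ i α β, α ≠ β → R i α * R i β = 0 := by
    intro i α β hne
    rw [hRmul, hPorth i β α (Ne.symm hne), Matrix.transpose_zero]
  have hRsum : ∀ i, ∑ α, R i α = 1 := by
    intro i
    rw [hRdef]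
    dsimp only
    rw [← Matrix.transpose_sum, hPsum i, Matrix.transpose_one]
  -- the conditional operators
  set Z : (i : ι) → κ i → Matrix (Fin d) (Fin d) ℂ :=
    fun i α => ptraceA ((P i α ⊗ₖ (1 : Matrix (Fin d) (Fin d) ℂ)) * ρ) with hZdef
  have hZUS' : ∀ i α β, α ≠ β → Z i α * Z i β = 0 := fun i α β h => hZUS i α β h
  have hZform : ∀ i α, Z i α = ∑ k, N k * R i α * (N k)ᴴ := by
    intro i α
    rw [hZdef]
    dsimp only
    rw [hB, master B (P i α)]
  have hZH : ∀ i α, (Z i α)ᴴ = Z i α := by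
    intro i α
    rw [hZform, Matrix.conjTranspose_sum]
    refine Finset.sum_congr rfl fun k _ => ?_
    rw [Matrix.conjTranspose_mul, Matrix.conjTranspose_mul, Matrix.conjTranspose_conjTranspose,
      hRH, Matrix.mul_assoc]
  set S : Matrix (Fin d) (Fin d) ℂ := ptraceA ρ with hSdef
  have hSform : S = ∑ k, N k * (N k)ᴴ := by
    have h1 : ((1 : Matrix (Fin d) (Fin d) ℂ) ⊗ₖ (1 : Matrix (Fin d) (Fin d) ℂ)) * (Bᴴ * B)
        = Bᴴ * B := by rw [Matrix.one_kronecker_one, Matrix.one_mul]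
    have h2 := master B 1
    rw [h1] at h2
    rw [hSdef, hB, h2]
    exact Finset.sum_congr rfl fun k _ => by rw [Matrix.transpose_one, Matrix.mul_one]
  have hSsum : ∀ i, ∑ α, Z i α = S := by
    intro i
    rw [hSform]
    calc ∑ α, Z i α = ∑ α, ∑ k, N k * R i α * (N k)ᴴ :=
          Finset.sum_congr rfl fun α _ => hZform i α
      _ = ∑ k, ∑ α, N k * R i α * (N k)ᴴ := Finset.sum_comm
      _ = ∑ k, N k * (N k)ᴴ := by
          refine Finset.sum_congr rfl fun k _ => ?_
          calc ∑ α, N k * R i α * (N k)ᴴ = (∑ α, N k * R i α) * (N k)ᴴ := by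
                rw [Finset.sum_mul]
            _ = (N k * ∑ α, R i α) * (N k)ᴴ := by rw [Finset.mul_sum]
            _ = N k * (N k)ᴴ := by rw [hRsum i, Matrix.mul_one]
  have hSH : Sᴴ = S := by
    rw [hSform, Matrix.conjTranspose_sum]
    exact Finset.sum_congr rfl fun k _ => by
      rw [Matrix.conjTranspose_mul, Matrix.conjTranspose_conjTranspose]
  have hZS : ∀ i α, Z i α * S = Z i α * Z i α := by
    intro i α
    rw [← hSsum i, Finset.mul_sum]
    rw [Finset.sum_eq_single α (fun β _ hβ => hZUS' i α β (Ne.symm hβ))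
      (fun h => absurd (Finset.mem_univ α) h)]
  have hSZ : ∀ i α, S * Z i α = Z i α * Z i α := by
    intro i α
    rw [← hSsum i, Finset.sum_mul]
    rw [Finset.sum_eq_single α (fun β _ hβ => hZUS' i β α hβ)
      (fun h => absurd (Finset.mem_univ α) h)]
  have hZcommS : ∀ i α, Z i α * S = S * Z i α := by
    intro i α
    rw [hZS, hSZ]
  -- pseudo-inverse machinery
  obtain ⟨Sp, hSpH, hSSSp, hSpcomm⟩ := exists_pseudoInv (show S.IsHermitian from hSH)
  have hSSp_comm : S * Sp = Sp * S := hSpcomm S rfl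
  have hSpSH : (S * Sp)ᴴ = S * Sp := by
    rw [Matrix.conjTranspose_mul, hSpH, hSH, hSSp_comm]
  set E : Matrix (Fin d) (Fin d) ℂ := 1 - S * Sp with hE
  have hEH : Eᴴ = E := by
    rw [hE, Matrix.conjTranspose_sub, Matrix.conjTranspose_one, hSpSH]
  have hSpSS : (S * Sp) * S = S := by
    rw [Matrix.mul_assoc, ← hSSp_comm, hSSSp]
  have hES : E * S = 0 := by
    rw [hE, Matrix.sub_mul, Matrix.one_mul, hSpSS, sub_self]
  -- E kills all N k * R i β
  have hENR : ∀ i β k, E * (N k * R i β) = 0 := by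
    intro i
    have hterm : ∀ (β : κ i) k, (E * (N k * R i β)) * (E * (N k * R i β))ᴴ
        = E * (N k * R i β * (N k)ᴴ) * E := by
      intro β k
      have hinner : R i β * (R i β * ((N k)ᴴ * E)) = R i β * ((N k)ᴴ * E) := by
        rw [← Matrix.mul_assoc, hRR]
      calc (E * (N k * R i β)) * (E * (N k * R i β))ᴴ
          = (E * (N k * R i β)) * ((N k * R i β)ᴴ * E) := by rw [Matrix.conjTranspose_mul, hEH]
        _ = (E * (N k * R i β)) * ((R i β * (N k)ᴴ) * E) := by
            rw [Matrix.conjTranspose_mul, hRH]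
        _ = E * (N k * (R i β * (R i β * ((N k)ᴴ * E)))) := by simp only [Matrix.mul_assoc]
        _ = E * (N k * (R i β * ((N k)ᴴ * E))) := by rw [hinner]
        _ = E * (N k * R i β * (N k)ᴴ) * E := by simp only [Matrix.mul_assoc]
    have hsum : (∑ p : κ i × (Fin d × Fin d),
        (E * (N p.2 * R i p.1)) * (E * (N p.2 * R i p.1))ᴴ).trace = 0 := by
      have : ∑ p : κ i × (Fin d × Fin d),
          (E * (N p.2 * R i p.1)) * (E * (N p.2 * R i p.1))ᴴ = E * S * E := by
        rw [Fintype.sum_prod_type]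
        calc ∑ β, ∑ k, (E * (N k * R i β)) * (E * (N k * R i β))ᴴ
            = ∑ β, ∑ k, E * (N k * R i β * (N k)ᴴ) * E := by
              exact Finset.sum_congr rfl fun β _ => Finset.sum_congr rfl fun k _ => hterm β k
          _ = ∑ β, E * (Z i β) * E := by
              refine Finset.sum_congr rfl fun β _ => ?_
              rw [hZform i β, Finset.mul_sum, Finset.sum_mul]
          _ = E * S * E := by
              rw [← hSsum i, Finset.mul_sum, Finset.sum_mul]
      rw [this, hES, Matrix.zero_mul, Matrix.trace_zero]
    intro β k
    exact eq_zero_of_sum_AAH_trace_zero hsum (β, k)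
  have hZE : ∀ i α, Z i α * (S * Sp) = Z i α := by
    intro i α
    have h0 : ∀ k, R i α * (N k)ᴴ * E = 0 := by
      intro k
      have h1 := congrArg Matrix.conjTranspose (hENR i α k)
      rw [Matrix.conjTranspose_mul, Matrix.conjTranspose_mul, hEH, hRH,
        Matrix.conjTranspose_zero] at h1
      exact h1
    have hZEzero : Z i α * E = 0 := by
      rw [hZform, Finset.sum_mul]
      refine Finset.sum_eq_zero fun k _ => ?_
      calc N k * R i α * (N k)ᴴ * E = N k * (R i α * (N k)ᴴ * E) := by
            simp only [Matrix.mul_assoc]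
        _ = 0 := by rw [h0 k, Matrix.mul_zero]
    have : Z i α * (1 - E) = Z i α := by
      rw [Matrix.mul_sub, Matrix.mul_one, hZEzero, sub_zero]
    rw [show S * Sp = 1 - E from by rw [hE, sub_sub_cancel]]
    exact this
  have hZSp : ∀ i α, Z i α * Sp = Sp * Z i α := fun i α => hSpcomm _ (hZcommS i α)
  -- the key intertwining relation
  have hkey : ∀ i α k, N k * R i α = (Z i α * Sp) * N k := by
    intro i α
    set Q : Matrix (Fin d) (Fin d) ℂ := Z i α * Sp with hQ
    have hQH : Qᴴ = Q := by
      rw [hQ, Matrix.conjTranspose_mul, hSpH, hZH, ← hZSp]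
    have hZQ : Z i α * Q = Z i α := by
      rw [hQ, ← Matrix.mul_assoc, ← hZS i α, Matrix.mul_assoc, hZE]
    have hQZ : Q * Z i α = Z i α := by
      rw [hQ, Matrix.mul_assoc, ← hZSp, ← Matrix.mul_assoc, ← hZS i α, Matrix.mul_assoc, hZE]
    have hQSQ : Q * S * Qᴴ = Z i α := by
      rw [hQH, hQ]
      calc Z i α * Sp * S * (Z i α * Sp)
          = Z i α * (Sp * S) * (Z i α * Sp) := by simp only [Matrix.mul_assoc]
        _ = Z i α * (S * Sp) * (Z i α * Sp) := by rw [hSSp_comm]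
        _ = Z i α * (Z i α * Sp) := by rw [hZE]
        _ = Z i α := by rw [← Matrix.mul_assoc, ← hZS i α, Matrix.mul_assoc, hZE]
    have hmagic : ∑ k, (N k * R i α - Q * N k) * (N k * R i α - Q * N k)ᴴ = 0 := by
      have hexp : ∀ k, (N k * R i α - Q * N k) * (N k * R i α - Q * N k)ᴴ
          = N k * R i α * (N k)ᴴ - N k * R i α * (N k)ᴴ * Q
            - Q * (N k * R i α * (N k)ᴴ) + Q * (N k * (N k)ᴴ) * Q := by
        intro k
        have hAH : (N k * R i α)ᴴ = R i α * (N k)ᴴ := by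
          rw [Matrix.conjTranspose_mul, hRH]
        have hBH : (Q * N k)ᴴ = (N k)ᴴ * Q := by
          rw [Matrix.conjTranspose_mul, hQH]
        rw [Matrix.conjTranspose_sub, hAH, hBH, Matrix.sub_mul, Matrix.mul_sub, Matrix.mul_sub]
        have e1 : N k * R i α * (R i α * (N k)ᴴ) = N k * R i α * (N k)ᴴ := by
          calc N k * R i α * (R i α * (N k)ᴴ) = N k * (R i α * R i α) * (N k)ᴴ := by
                simp only [Matrix.mul_assoc]
            _ = N k * R i α * (N k)ᴴ := by rw [hRR]
        have e2 : N k * R i α * ((N k)ᴴ * Q) = N k * R i α * (N k)ᴴ * Q := by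
          simp only [Matrix.mul_assoc]
        have e3 : Q * N k * (R i α * (N k)ᴴ) = Q * (N k * R i α * (N k)ᴴ) := by
          simp only [Matrix.mul_assoc]
        have e4 : Q * N k * ((N k)ᴴ * Q) = Q * (N k * (N k)ᴴ) * Q := by
          simp only [Matrix.mul_assoc]
        rw [e1, e2, e3, e4]
        abel
      calc ∑ k, (N k * R i α - Q * N k) * (N k * R i α - Q * N k)ᴴ
          = ∑ k, (N k * R i α * (N k)ᴴ - N k * R i α * (N k)ᴴ * Q
            - Q * (N k * R i α * (N k)ᴴ) + Q * (N k * (N k)ᴴ) * Q) :=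
            Finset.sum_congr rfl fun k _ => hexp k
        _ = Z i α - Z i α * Q - Q * Z i α + Q * S * Q := by
            rw [Finset.sum_add_distrib, Finset.sum_sub_distrib, Finset.sum_sub_distrib]
            congr 1
            · congr 1
              · congr 1
                · exact (hZform i α).symm
                · rw [← Finset.sum_mul, ← hZform i α]
              · rw [← Finset.mul_sum, ← hZform i α]
            · rw [← Finset.sum_mul, ← Finset.mul_sum, ← hSform]
        _ = 0 := by
            rw [hZQ, hQZ]
            rw [show Q * S * Q = Z i α from by rw [← hQSQ, hQH]]
            abel
    intro k
    have hk := eq_zero_of_sum_AAH_trace_zero (by rw [hmagic, Matrix.trace_zero]) k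
    have := sub_eq_zero.mp hk
    exact this
  -- all matrices are intertwined
  have hmemP : ∀ i α, P i α ∈ interSub N := by
    intro i α
    refine ⟨Z i α * Sp, Z i α * Sp, fun k => hkey i α k, fun k => ?_⟩
    rw [show (P i α)ᴴ = P i α from hPherm i α]
    exact hkey i α k
  have htop : ∀ X : Matrix (Fin d) (Fin d) ℂ, X ∈ interSub N := by
    have hle : StarAlgebra.adjoin ℂ {X | ∃ i α, X = P i α} ≤ interSub N := by
      rw [StarAlgebra.adjoin_le_iff]
      rintro X ⟨i, α, rfl⟩
      exact hmemP i α
    rw [hgen] at hle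
    intro X
    exact hle (by trivial)
  have hallX : ∀ X : Matrix (Fin d) (Fin d) ℂ, ∃ Y, ∀ k, N k * X = Y * N k := by
    intro X
    obtain ⟨Y, Y', h1, h2⟩ := htop Xᵀ
    exact ⟨Y, fun k => by simpa [Matrix.transpose_transpose] using h1 k⟩
  -- some Kraus operator is nonzero
  have hex : ∃ k0, N k0 ≠ 0 := by
    by_contra hc
    push_neg at hc
    have hS0 : S = 0 := by
      rw [hSform]
      exact Finset.sum_eq_zero fun k _ => by rw [hc k, Matrix.zero_mul]
    have h0 : ρ.trace = 0 := by
      rw [← trace_ptraceA ρ, ← hSdef, hS0, Matrix.trace_zero]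
    rw [htr] at h0
    exact one_ne_zero h0
  obtain ⟨k0, hk0⟩ := hex
  set V : Matrix (Fin d) (Fin d) ℂ := N k0 with hV
  -- V is invertible
  have hVinj : Function.Injective V.mulVec := by
    intro u v huv
    by_contra hne
    set w : Fin d → ℂ := u - v with hw
    have hw0 : w ≠ 0 := sub_ne_zero.mpr hne
    have hVw : V *ᵥ w = 0 := by rw [hw, Matrix.mulVec_sub, huv, sub_self]
    obtain ⟨j, hj⟩ : ∃ j, w j ≠ 0 := by
      by_contra h
      push_neg at h
      exact hw0 (funext h)
    apply hk0
    have hkill : ∀ v0 : Fin d → ℂ, V *ᵥ v0 = 0 := by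
      intro v0
      set X : Matrix (Fin d) (Fin d) ℂ :=
        Matrix.of fun a b => v0 a * (if b = j then (w j)⁻¹ else 0) with hX
      have hXw : X *ᵥ w = v0 := by
        funext a
        simp only [hX, Matrix.mulVec, dotProduct, Matrix.of_apply, ite_mul, zero_mul,
          mul_ite, mul_zero, Finset.sum_ite_eq', Finset.mem_univ, if_true]
        rw [mul_assoc, inv_mul_cancel₀ hj, mul_one]
      obtain ⟨Y, hY⟩ := hallX X
      have h1 := congrArg (fun M => M *ᵥ w) (hY k0)
      simp only [← Matrix.mulVec_mulVec] at h1
      rw [hXw, hVw, Matrix.mulVec_zero] at h1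
      exact h1
    ext a b
    have h2 := congrFun (hkill (Pi.single b 1)) a
    rw [Matrix.mulVec_single] at h2
    simpa using h2
  have hVunit : IsUnit V := Matrix.mulVec_injective_iff_isUnit.mp hVinj
  have hVdet : IsUnit V.det := (Matrix.isUnit_iff_isUnit_det V).mp hVunit
  have hVV : V * V⁻¹ = 1 := Matrix.mul_nonsing_inv V hVdet
  have hV'V : V⁻¹ * V = 1 := Matrix.nonsing_inv_mul V hVdet
  -- all Kraus operators are proportional to V
  have hprop : ∀ k, ∃ c : ℂ, N k = c • V := by
    intro k
    have hcomm : ∀ X : Matrix (Fin d) (Fin d) ℂ, (V⁻¹ * N k) * X = X * (V⁻¹ * N k) := by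
      intro X
      obtain ⟨Y, hY⟩ := hallX X
      have hYV : Y = V * X * V⁻¹ := by
        calc Y = Y * (V * V⁻¹) := by rw [hVV, Matrix.mul_one]
          _ = (Y * V) * V⁻¹ := by rw [Matrix.mul_assoc]
          _ = (V * X) * V⁻¹ := by rw [← hY k0]
      calc (V⁻¹ * N k) * X = V⁻¹ * (N k * X) := by rw [Matrix.mul_assoc]
        _ = V⁻¹ * (Y * N k) := by rw [hY k]
        _ = V⁻¹ * (V * X * V⁻¹ * N k) := by rw [hYV]
        _ = (V⁻¹ * V) * (X * (V⁻¹ * N k)) := by simp only [Matrix.mul_assoc]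
        _ = X * (V⁻¹ * N k) := by rw [hV'V, Matrix.one_mul]
    obtain ⟨c, hc⟩ := comm_all_scalar (V⁻¹ * N k) hcomm
    refine ⟨c, ?_⟩
    calc N k = (V * V⁻¹) * N k := by rw [hVV, Matrix.one_mul]
      _ = V * (V⁻¹ * N k) := by rw [Matrix.mul_assoc]
      _ = V * (c • 1) := by rw [hc]
      _ = c • V := by rw [Matrix.mul_smul, Matrix.mul_one]
  choose c hc using hprop
  have hck0 : c k0 ≠ 0 := by
    intro h0
    apply hk0
    rw [hV, hc k0, h0, zero_smul]
  set t : ℝ := ∑ k, Complex.normSq (c k) with ht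
  have ht0 : t ≠ 0 := by
    have hpos : 0 < t := by
      rw [ht]
      refine Finset.sum_pos' (fun k _ => Complex.normSq_nonneg _) ⟨k0, Finset.mem_univ k0, ?_⟩
      exact Complex.normSq_pos.mpr hck0
    exact hpos.ne'
  have htC : (t : ℂ) ≠ 0 := Complex.ofReal_ne_zero.mpr ht0
  -- rank one
  have hBfac : B = (Matrix.of fun (k : Fin d × Fin d) (_ : Unit) => star (c k))
      * (Matrix.of fun (_ : Unit) (p : Fin d × Fin d) => star (V p.2 p.1)) := by
    ext k p
    have hBN : B k p = star (N k p.2 p.1) := by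
      rw [hN]
      simp [krausN]
    rw [hBN, show N k = c k • V from hc k]
    simp [Matrix.mul_apply]
  have hrank : ρ.rank = 1 := by
    have hle : ρ.rank ≤ 1 := by
      rw [hB, Matrix.rank_conjTranspose_mul_self, hBfac]
      refine le_trans (Matrix.rank_mul_le_left _ _) ?_
      refine le_trans (Matrix.rank_le_card_width _) ?_
      simp
    have hne : ρ.rank ≠ 0 := by
      intro h0
      have hρ0 := rank_eq_zero_imp h0
      rw [hρ0, Matrix.trace_zero] at htr
      exact one_ne_zero htr.symm
    omega
  refine ⟨hrank, ?_⟩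
  -- maximal entanglement
  set G : Matrix (Fin d) (Fin d) ℂ := Vᴴ * V with hG
  have hZsingle : ∀ i α, Z i α = (t : ℂ) • (V * R i α * Vᴴ) := by
    intro i α
    rw [hZform]
    calc ∑ k, N k * R i α * (N k)ᴴ
        = ∑ k, ((Complex.normSq (c k) : ℂ)) • (V * R i α * Vᴴ) := by
          refine Finset.sum_congr rfl fun k _ => ?_
          rw [show N k = c k • V from hc k]
          rw [Matrix.conjTranspose_smul, Matrix.smul_mul, Matrix.smul_mul, Matrix.mul_smul,
            smul_smul]
          rw [show star (c k) = (starRingEnd ℂ) (c k) from rfl, Complex.mul_conj]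
      _ = (t : ℂ) • (V * R i α * Vᴴ) := by
          rw [← Finset.sum_smul, ht]
          push_cast
          rfl
  have hRGR : ∀ i α β, α ≠ β → R i α * (G * R i β) = 0 := by
    intro i α β hne
    have h0 := hZUS' i α β hne
    rw [hZsingle i α, hZsingle i β, smul_mul_smul_comm] at h0
    have h1 : V * R i α * Vᴴ * (V * R i β * Vᴴ) = 0 := by
      have := smul_eq_zero.mp h0
      rcases this with h | h
      · exact absurd h (by simpa using htC)
      · exact h
    have h2 : V * (R i α * (G * R i β)) * Vᴴ = 0 := by
      rw [← h1, hG]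
      simp only [Matrix.mul_assoc]
    have h3 : V⁻¹ * (V * (R i α * (G * R i β)) * Vᴴ) * (V⁻¹)ᴴ = 0 := by
      rw [h2, Matrix.mul_zero, Matrix.zero_mul]
    have h4 : Vᴴ * (V⁻¹)ᴴ = 1 := by
      rw [← Matrix.conjTranspose_mul, hV'V, Matrix.conjTranspose_one]
    calc R i α * (G * R i β)
        = (V⁻¹ * V) * (R i α * (G * R i β)) * (Vᴴ * (V⁻¹)ᴴ) := by
          rw [hV'V, h4, Matrix.one_mul, Matrix.mul_one]
      _ = V⁻¹ * (V * (R i α * (G * R i β)) * Vᴴ) * (V⁻¹)ᴴ := by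
          simp only [Matrix.mul_assoc]
      _ = 0 := h3
  have hGR : ∀ i α, G * R i α = R i α * G := by
    intro i α
    have hdecomp : G = ∑ β, R i β * G * R i β := by
      calc G = (∑ β, R i β) * G * (∑ γ, R i γ) := by
            rw [hRsum i, Matrix.one_mul, Matrix.mul_one]
        _ = ∑ β, R i β * G * (∑ γ, R i γ) := by rw [Finset.sum_mul, Finset.sum_mul]
        _ = ∑ β, ∑ γ, R i β * G * R i γ := by
            exact Finset.sum_congr rfl fun β _ => by rw [Finset.mul_sum]
        _ = ∑ β, R i β * G * R i β := by
            refine Finset.sum_congr rfl fun β _ => ?_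
            refine Finset.sum_eq_single β (fun γ _ hγ => ?_)
              (fun h => absurd (Finset.mem_univ β) h)
            rw [Matrix.mul_assoc (R i β) G (R i γ), hRGR i β γ (Ne.symm hγ)]
    have hleft : G * R i α = R i α * G * R i α * R i α := by
      calc G * R i α = (∑ β, R i β * G * R i β) * R i α := by rw [← hdecomp]
        _ = ∑ β, R i β * G * R i β * R i α := by rw [Finset.sum_mul]
        _ = R i α * G * R i α * R i α := by
            refine Finset.sum_eq_single α (fun β _ hβ => ?_)
              (fun h => absurd (Finset.mem_univ α) h)
            rw [Matrix.mul_assoc (R i β * G) (R i β) (R i α), hRorth i β α hβ,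
              Matrix.mul_zero]
    have hright : R i α * G = R i α * (R i α * G * R i α) := by
      calc R i α * G = R i α * ∑ β, R i β * G * R i β := by rw [← hdecomp]
        _ = ∑ β, R i α * (R i β * G * R i β) := by rw [Finset.mul_sum]
        _ = R i α * (R i α * G * R i α) := by
            refine Finset.sum_eq_single α (fun β _ hβ => ?_)
              (fun h => absurd (Finset.mem_univ α) h)
            rw [show R i β * G * R i β = R i β * (G * R i β) from Matrix.mul_assoc _ _ _,
              ← Matrix.mul_assoc (R i α) (R i β) (G * R i β), hRorth i α β (Ne.symm hβ),
              Matrix.zero_mul]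
    have hleft' : G * R i α = R i α * G * R i α := by
      rw [hleft, Matrix.mul_assoc (R i α * G) (R i α) (R i α), hRR]
    have hright' : R i α * G = R i α * G * R i α := by
      rw [hright, ← Matrix.mul_assoc (R i α) (R i α * G) (R i α),
        ← Matrix.mul_assoc (R i α) (R i α) G, hRR,
        Matrix.mul_assoc (R i α * G) (R i α) (R i α), hRR]
    rw [hleft']
    exact hright'.symm
  -- G commutes with everything, hence is scalar
  have hmemP2 : ∀ i α, P i α ∈ commSub G := by
    intro i α
    constructor
    · exact hGR i α
    · rw [show (P i α)ᴴ = P i α from hPherm i α]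
      exact hGR i α
  have htop2 : ∀ X : Matrix (Fin d) (Fin d) ℂ, X ∈ commSub G := by
    have hle : StarAlgebra.adjoin ℂ {X | ∃ i α, X = P i α} ≤ commSub G := by
      rw [StarAlgebra.adjoin_le_iff]
      rintro X ⟨i, α, rfl⟩
      exact hmemP2 i α
    rw [hgen] at hle
    intro X
    exact hle (by trivial)
  have hGall : ∀ X : Matrix (Fin d) (Fin d) ℂ, G * X = X * G := by
    intro X
    have h1 := (htop2 Xᵀ).1
    simpa [Matrix.transpose_transpose] using h1
  obtain ⟨g, hg⟩ := comm_all_scalar G hGall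
  -- compute the partial trace over B
  have hptrB : ptraceB ρ = ((t : ℂ) * g) • 1 := by
    have hstep : ptraceB ρ = (t : ℂ) • Gᵀ := by
      rw [hB, ptraceB_form]
      calc ∑ k, ((krausN B k)ᴴ * krausN B k)ᵀ
          = ∑ k, ((Complex.normSq (c k) : ℂ)) • Gᵀ := by
            refine Finset.sum_congr rfl fun k _ => ?_
            rw [show krausN B k = c k • V from hc k]
            rw [Matrix.conjTranspose_smul, Matrix.smul_mul, Matrix.mul_smul, smul_smul,
              Matrix.transpose_smul, hG]
            congr 1
            rw [show star (c k) = (starRingEnd ℂ) (c k) from rfl, mul_comm, Complex.mul_conj]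
        _ = (t : ℂ) • Gᵀ := by
            rw [← Finset.sum_smul, ht]
            push_cast
            rfl
    rw [hstep, hg]
    rw [Matrix.transpose_smul, Matrix.transpose_one, smul_smul]
  have htrB : (ptraceB ρ).trace = 1 := by rw [trace_ptraceB, htr]
  have hgd : (d : ℂ) * ((t : ℂ) * g) = 1 := by
    rw [hptrB] at htrB
    rw [Matrix.trace_smul, Matrix.trace_one] at htrB
    simpa [Fintype.card_fin, mul_comm] using htrB
  have hfin : (t : ℂ) * g = ((d : ℂ))⁻¹ := eq_inv_of_mul_eq_one_left
    (by rw [mul_comm]; exact hgd)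
  rw [hptrB, hfin]
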